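/- Let j : M → R be a homomorphism of commutative monoids such that every element of R has a positive integer multiple lying in the image of j. Let N be an integral, saturated, sharp commutative monoid (i.e., N is cancellative, n·x ∈ N with x in N^gp implies x ∈ N, and the only unit of N is 0). If f, g : R → N are monoid homomorphisms with f ∘ j = g ∘ j, then f = g. -/
import Mathlib

/-!
STATEMENT 0: If `j : M → R` is a monoid homomorphism whose image is "dense up to
saturation" (every element of `R` has a positive multiple in the image of `j`),
and `N` is an integral (cancellative), saturated, sharp commutative monoid —
realised here as a submonoid `N` of its groupification `G` — then any two
homomorphisms `f, g : R → N` with `f ∘ j = g ∘ j` are equal.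
-/
theorem roots_unique_factorisation
    {M R G : Type*} [AddCommMonoid M] [AddCommMonoid R] [AddCommGroup G]
    (N : AddSubmonoid G)
    -- `G` is the groupification of `N`
    (hgen : ∀ x : G, ∃ a ∈ N, ∃ b ∈ N, x = a - b)
    -- `N` is saturated in its groupification
    (hsat : ∀ (x : G) (d : ℕ), 0 < d → d • x ∈ N → x ∈ N)
    -- `N` is sharp
    (hsharp : ∀ x ∈ N, -x ∈ N → x = 0)
    (j : M →+ R)
    -- every element of `R` has a positive integer multiple in the image of `j`
    (hj : ∀ r : R, ∃ d : ℕ, 0 < d ∧ ∃ m : M, d • r = j m)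
    (f g : R →+ G)
    (hf : ∀ r : R, f r ∈ N) (hg : ∀ r : R, g r ∈ N)
    (h : f.comp j = g.comp j) :
    f = g := by
  ext r
  obtain ⟨d, hd, m, hm⟩ := hj r
  have key : d • (f r - g r) = 0 := by
    have h1 : f (j m) = g (j m) := congrFun (congrArg DFunLike.coe h) m
    rw [smul_sub, ← map_nsmul, ← map_nsmul, hm, h1, sub_self]
  have h2 : f r - g r ∈ N := hsat _ d hd (by rw [key]; exact N.zero_mem)
  have h3 : -(f r - g r) ∈ N := hsat _ d hd (by rw [smul_neg, key, neg_zero]; exact N.zero_mem)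
  have := hsharp _ h2 h3
  exact sub_eq_zero.mp this
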